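/- Let C be a locally presentable category with a cofibrantly generated weak factorization system (L, R) such that ∅ → X lies in L for every object X, equipped with an exact cylinder I and a class An(I) of right I-anodyne extensions. Then a morphism of C is I-final if and only if it can be factored as a right I-anodyne extension followed by a morphism in the class R. -/

import Mathlib

set_option linter.unusedSectionVars false

open CategoryTheory CategoryTheory.Limits

universe v u

namespace Paper

variable {C : Type u} [Category.{v} C]

/-- The class of morphisms having the left lifting property against every morphism in `T`. -/
def llp (T : MorphismProperty C) : MorphismProperty C :=
  fun _ _ f => ∀ ⦃X Y : C⦄ (g : X ⟶ Y), T g → HasLiftingProperty f g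

/-- The class of morphisms having the right lifting property against every morphism in `T`. -/
def rlp (T : MorphismProperty C) : MorphismProperty C :=
  fun _ _ g => ∀ ⦃A B : C⦄ (f : A ⟶ B), T f → HasLiftingProperty f g

/-- The morphism property associated to a set of arrows. -/
def ofArrows (S : Set (Arrow C)) : MorphismProperty C :=
  fun _ _ f => Arrow.mk f ∈ S

/-- A (possibly large) category `J` is `κ`-filtered if every diagram in `J` indexed by a
small category of size `< κ` admits a cocone. -/
def IsCardinalFiltered (J : Cat.{v, v}) (κ : Cardinal.{v}) : Prop :=
  ∀ K : Cat.{v, v}, Cardinal.mk (Arrow K) < κ → ∀ F : K ⥤ J, Nonempty (Cocone F)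

/-- An object `X` is `κ`-presentable if `Hom(X, -)` preserves colimits of `κ`-filtered
diagrams. -/
def IsPresentableObj (κ : Cardinal.{v}) (X : C) : Prop :=
  ∀ J : Cat.{v, v}, IsCardinalFiltered J κ →
    PreservesColimitsOfShape J (coyoneda.obj (Opposite.op X))

/-- A category is locally presentable if it is cocomplete and there is a regular cardinal `κ`
and a small family of `κ`-presentable objects such that every object is a `κ`-filtered colimit
of objects of the family. -/
class LocallyPresentable (C : Type u) [Category.{v} C] extends HasColimits C : Prop where
  exists_presentable_generator :
    ∃ κ : Cardinal.{v}, κ.IsRegular ∧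
      ∃ (ι : Type v) (G : ι → C), (∀ i, IsPresentableObj κ (G i)) ∧
        ∀ X : C, ∃ (J : Cat.{v, v}) (F : J ⥤ C) (c : Cocone F),
          IsCardinalFiltered J κ ∧ Nonempty (IsColimit c) ∧
          (∀ j : J, ∃ i, Nonempty (F.obj j ≅ G i)) ∧ Nonempty (c.pt ≅ X)

/-- `(L, R)` is a cofibrantly generated weak factorization system such that every morphism
from the initial object is in `L`. -/
structure IsCofGenWFS [HasColimits C] (L R : MorphismProperty C) : Prop where
  exists_generating_set : ∃ S : Set (Arrow C), Small.{v} S ∧ L = llp (rlp (ofArrows S))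
  rlp_eq : R = rlp L
  factorization : ∀ ⦃X Y : C⦄ (f : X ⟶ Y),
    ∃ (Z : C) (i : X ⟶ Z) (p : Z ⟶ Y), L i ∧ R p ∧ i ≫ p = f
  initial_mem : ∀ X : C, L (initial.to X)

/-- A functorial cylinder on `C`. -/
structure Cylinder (C : Type u) [Category.{v} C] where
  I : C ⥤ C
  d0 : 𝟭 C ⟶ I
  d1 : 𝟭 C ⟶ I
  σ : I ⟶ 𝟭 C
  d0_σ : ∀ X : C, d0.app X ≫ σ.app X = 𝟙 X
  d1_σ : ∀ X : C, d1.app X ≫ σ.app X = 𝟙 X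

namespace Cylinder

variable (E : Cylinder C)

lemma d0_naturality' {K M : C} (f : K ⟶ M) :
    f ≫ E.d0.app M = E.d0.app K ≫ E.I.map f := by
  simpa using E.d0.naturality f

lemma d1_naturality' {K M : C} (f : K ⟶ M) :
    f ≫ E.d1.app M = E.d1.app K ≫ E.I.map f := by
  simpa using E.d1.naturality f

variable [HasColimits C]

/-- The canonical map `X ⊔ X ⟶ I(X)`. -/
noncomputable def ι (X : C) : X ⨿ X ⟶ E.I.obj X :=
  coprod.desc (E.d0.app X) (E.d1.app X)

lemma ι_naturality {K M : C} (f : K ⟶ M) :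
    coprod.map f f ≫ E.ι M = E.ι K ≫ E.I.map f := by
  have h0 := E.d0.naturality f
  have h1 := E.d1.naturality f
  simp only [Functor.id_map] at h0 h1
  apply coprod.hom_ext <;> simp [ι, h0, h1]

/-- The pushout-corner map `∂I ⊠ f : (M ⊔ M) ⊔_{K ⊔ K} I(K) ⟶ I(M)`. -/
noncomputable def boundaryBox {K M : C} (f : K ⟶ M) :
    pushout (coprod.map f f) (E.ι K) ⟶ E.I.obj M :=
  pushout.desc (E.ι M) (E.I.map f) (E.ι_naturality f)

/-- The pushout-corner map `∂0 ⊠ f : M ⊔_K I(K) ⟶ I(M)`. -/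
noncomputable def box0 {K M : C} (f : K ⟶ M) :
    pushout f (E.d0.app K) ⟶ E.I.obj M :=
  pushout.desc (E.d0.app M) (E.I.map f) (E.d0_naturality' f)

/-- The pushout-corner map `∂1 ⊠ f : M ⊔_K I(K) ⟶ I(M)`. -/
noncomputable def box1 {K M : C} (f : K ⟶ M) :
    pushout f (E.d1.app K) ⟶ E.I.obj M :=
  pushout.desc (E.d1.app M) (E.I.map f) (E.d1_naturality' f)

end Cylinder

/-- A cylinder is exact with respect to the class `L` if it preserves small colimits,
the maps `X ⊔ X ⟶ I(X)` are in `L`, and the pushout-corner maps of morphisms of `L` are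
again in `L`. -/
structure IsExactCylinder [HasColimits C] (E : Cylinder C) (L : MorphismProperty C) : Prop where
  preservesColimits : PreservesColimits E.I
  ι_mem : ∀ X : C, L (E.ι X)
  boundaryBox_mem : ∀ ⦃K M : C⦄ (f : K ⟶ M), L f → L (E.boundaryBox f)
  box0_mem : ∀ ⦃K M : C⦄ (f : K ⟶ M), L f → L (E.box0 f)
  box1_mem : ∀ ⦃K M : C⦄ (f : K ⟶ M), L f → L (E.box1 f)

/-- `An` is a class of right `I`-anodyne extensions. -/
structure IsRightAnodyneClass [HasColimits C] (E : Cylinder C) (L : MorphismProperty C)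
    (An : MorphismProperty C) : Prop where
  le : An ≤ L
  exists_generating_set : ∃ Λ : Set (Arrow C), Small.{v} Λ ∧ ofArrows Λ ≤ L ∧
    An = llp (rlp (ofArrows Λ))
  box1_mem : ∀ ⦃K M : C⦄ (f : K ⟶ M), L f → An (E.box1 f)
  boundaryBox_mem : ∀ ⦃K M : C⦄ (f : K ⟶ M), An f → An (E.boundaryBox f)

/-- `An` is a class of left `I`-anodyne extensions. -/
structure IsLeftAnodyneClass [HasColimits C] (E : Cylinder C) (L : MorphismProperty C)
    (An : MorphismProperty C) : Prop where
  le : An ≤ L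
  exists_generating_set : ∃ Λ : Set (Arrow C), Small.{v} Λ ∧ ofArrows Λ ≤ L ∧
    An = llp (rlp (ofArrows Λ))
  box0_mem : ∀ ⦃K M : C⦄ (f : K ⟶ M), L f → An (E.box0 f)
  boundaryBox_mem : ∀ ⦃K M : C⦄ (f : K ⟶ M), An f → An (E.boundaryBox f)

/-- A morphism is an `An`-fibration if it has the right lifting property against all
morphisms of `An`. -/
def IsFib (An : MorphismProperty C) {X Y : C} (p : X ⟶ Y) : Prop :=
  ∀ ⦃A B : C⦄ (f : A ⟶ B), An f → HasLiftingProperty f p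

/-- An object `W` is `An`-fibrant if the map `W ⟶ *` has the right lifting property against
all morphisms of `An`, i.e. every morphism to `W` extends along every morphism of `An`. -/
def IsFibrantObj (An : MorphismProperty C) (W : C) : Prop :=
  ∀ ⦃A B : C⦄ (f : A ⟶ B), An f → ∀ a : A ⟶ W, ∃ b : B ⟶ W, f ≫ b = a

namespace Cylinder

variable (E : Cylinder C)

/-- An `I`-homotopy from `f` to `g`. -/
def Homotopy {X Y : C} (f g : X ⟶ Y) : Prop :=
  ∃ h : E.I.obj X ⟶ Y, E.d0.app X ≫ h = f ∧ E.d1.app X ≫ h = g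

/-- `[X, Y]_I`, the quotient of `Hom(X, Y)` by the equivalence relation generated by
`I`-homotopy. -/
def HoHom (X Y : C) : Type v :=
  Quot (fun f g : X ⟶ Y => E.Homotopy f g)

/-- Precomposition `f^* : [B, W]_I ⟶ [A, W]_I`. -/
def precompQ {A B : C} (f : A ⟶ B) (W : C) : E.HoHom B W → E.HoHom A W :=
  Quot.lift (fun g => Quot.mk _ (f ≫ g)) (by
    rintro g g' ⟨h, h0, h1⟩
    apply Quot.sound
    refine ⟨E.I.map f ≫ h, ?_, ?_⟩
    · rw [← Category.assoc, ← E.d0_naturality' f, Category.assoc, h0]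
    · rw [← Category.assoc, ← E.d1_naturality' f, Category.assoc, h1])

end Cylinder

/-- `f` is a weak equivalence if it induces bijections `[B, W]_I ≅ [A, W]_I` for all
fibrant `W`. -/
def IsWeakEq (E : Cylinder C) (An : MorphismProperty C) {A B : C} (f : A ⟶ B) : Prop :=
  ∀ W : C, IsFibrantObj An W → Function.Bijective (E.precompQ f W)

/-- `f` is a retract of `f'`. -/
def IsRetractOf {X Y X' Y' : C} (f : X ⟶ Y) (f' : X' ⟶ Y') : Prop :=
  ∃ (i : X ⟶ X') (r : X' ⟶ X) (j : Y ⟶ Y') (s : Y' ⟶ Y),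
    i ≫ r = 𝟙 X ∧ j ≫ s = 𝟙 Y ∧ i ≫ f' = f ≫ j ∧ f' ≫ s = r ≫ f

/-- A model structure on a category: the classes of weak equivalences, cofibrations and
fibrations, subject to the two-out-of-three, retract, lifting and factorization axioms. -/
structure ModelStructure (C : Type u) [Category.{v} C] where
  weq : MorphismProperty C
  cof : MorphismProperty C
  fib : MorphismProperty C
  weq_id : ∀ X : C, weq (𝟙 X)
  weq_comp : ∀ ⦃X Y Z : C⦄ (f : X ⟶ Y) (g : Y ⟶ Z), weq f → weq g → weq (f ≫ g)
  weq_cancel_left : ∀ ⦃X Y Z : C⦄ (f : X ⟶ Y) (g : Y ⟶ Z), weq f → weq (f ≫ g) → weq g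
  weq_cancel_right : ∀ ⦃X Y Z : C⦄ (f : X ⟶ Y) (g : Y ⟶ Z), weq g → weq (f ≫ g) → weq f
  weq_retract : ∀ ⦃X Y X' Y' : C⦄ (f : X ⟶ Y) (f' : X' ⟶ Y'),
    IsRetractOf f f' → weq f' → weq f
  cof_retract : ∀ ⦃X Y X' Y' : C⦄ (f : X ⟶ Y) (f' : X' ⟶ Y'),
    IsRetractOf f f' → cof f' → cof f
  fib_retract : ∀ ⦃X Y X' Y' : C⦄ (f : X ⟶ Y) (f' : X' ⟶ Y'),
    IsRetractOf f f' → fib f' → fib f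
  lift_trivCof_fib : ∀ ⦃A B X Y : C⦄ (i : A ⟶ B) (p : X ⟶ Y),
    cof i → weq i → fib p → HasLiftingProperty i p
  lift_cof_trivFib : ∀ ⦃A B X Y : C⦄ (i : A ⟶ B) (p : X ⟶ Y),
    cof i → fib p → weq p → HasLiftingProperty i p
  fact_cof_trivFib : ∀ ⦃X Y : C⦄ (f : X ⟶ Y),
    ∃ (Z : C) (i : X ⟶ Z) (p : Z ⟶ Y), cof i ∧ fib p ∧ weq p ∧ i ≫ p = f
  fact_trivCof_fib : ∀ ⦃X Y : C⦄ (f : X ⟶ Y),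
    ∃ (Z : C) (i : X ⟶ Z) (p : Z ⟶ Y), cof i ∧ weq i ∧ fib p ∧ i ≫ p = f

/-- An object `W` is fibrant for a model structure if every morphism to `W` extends along
every trivial cofibration, i.e. `W ⟶ *` has the right lifting property against trivial
cofibrations. -/
def ModelStructure.Fibrant (M : ModelStructure C) (W : C) : Prop :=
  ∀ ⦃A B : C⦄ (i : A ⟶ B), M.cof i → M.weq i → ∀ a : A ⟶ W, ∃ b : B ⟶ W, i ≫ b = a


/-- Morphisms over `A` from `(X, u)` to `(W, q)`. -/
def OverHom {X W A : C} (u : X ⟶ A) (q : W ⟶ A) : Type v :=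
  { g : X ⟶ W // g ≫ q = u }

namespace Cylinder

variable (E : Cylinder C)

/-- An `I`-homotopy over `A`. -/
def OverHomotopy {X W A : C} (u : X ⟶ A) (q : W ⟶ A)
    (g g' : OverHom u q) : Prop :=
  ∃ h : E.I.obj X ⟶ W, E.d0.app X ≫ h = g.1 ∧ E.d1.app X ≫ h = g'.1 ∧
    h ≫ q = E.σ.app X ≫ u

/-- Homotopy classes of morphisms over `A`, `[(X, u), (W, q)]_{I_A}`. -/
def OverHoHom {X W A : C} (u : X ⟶ A) (q : W ⟶ A) : Type v :=
  Quot (E.OverHomotopy u q)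

/-- Precomposition `[(Y, p), (W, q)]_{I_A} ⟶ [(X, f ≫ p), (W, q)]_{I_A}`. -/
def overPrecompQ {X Y A W : C} (f : X ⟶ Y) (p : Y ⟶ A) (q : W ⟶ A) :
    E.OverHoHom p q → E.OverHoHom (f ≫ p) q :=
  Quot.lift (fun g => Quot.mk _ ⟨f ≫ g.1, by rw [Category.assoc, g.2]⟩)
    (by
      rintro g g' ⟨h, h0, h1, hq⟩
      apply Quot.sound
      refine ⟨E.I.map f ≫ h, ?_, ?_, ?_⟩
      · rw [← Category.assoc, ← E.d0_naturality' f, Category.assoc, h0]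
      · rw [← Category.assoc, ← E.d1_naturality' f, Category.assoc, h1]
      · have hnat := E.σ.naturality f
        simp only [Functor.id_map] at hnat
        simp only [Category.assoc, hq]
        rw [← Category.assoc, hnat, Category.assoc])

end Cylinder

/-- A morphism `f : X ⟶ Y` is `I`-final if for every object `A`, every `p : Y ⟶ A` and
every right `I`-fibration `q : W ⟶ A`, the induced map
`[(Y, p), (W, q)]_{I_A} ⟶ [(X, f ≫ p), (W, q)]_{I_A}` is bijective. -/
def IsFinal (E : Cylinder C) (An : MorphismProperty C) {X Y : C} (f : X ⟶ Y) : Prop :=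
  ∀ (A : C) (p : Y ⟶ A) ⦃W : C⦄ (q : W ⟶ A), IsFib An q →
    Function.Bijective (E.overPrecompQ f p q)

section Auxiliary

lemma aux_rel_of_quot_eq {α : Sort*} {r : α → α → Prop} (hr : Equivalence r) {a b : α}
    (h : Quot.mk r a = Quot.mk r b) : r a b := by
  have h2 : Quot.lift (r a) (fun x y hxy => propext ⟨fun h' => hr.trans h' hxy,
      fun h' => hr.trans h' (hr.symm hxy)⟩) (Quot.mk r b) := by
    rw [← h]; exact hr.refl a
  exact h2

variable {C : Type u} [Category.{v} C] [HasColimits C]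
variable {L An : MorphismProperty C} (E : Cylinder C)

lemma aux_sigma_nat {K M : C} (f : K ⟶ M) :
    E.I.map f ≫ E.σ.app M = E.σ.app K ≫ f := by
  simpa using E.σ.naturality f

lemma aux_sigma_nat_assoc {K M D : C} (f : K ⟶ M) (x : M ⟶ D) :
    E.I.map f ≫ E.σ.app M ≫ x = E.σ.app K ≫ f ≫ x := by
  rw [← Category.assoc, aux_sigma_nat, Category.assoc]

lemma aux_d0_nat_assoc {K M D : C} (f : K ⟶ M) (x : E.I.obj M ⟶ D) :
    f ≫ E.d0.app M ≫ x = E.d0.app K ≫ E.I.map f ≫ x := by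
  rw [← Category.assoc, E.d0_naturality', Category.assoc]

lemma aux_d1_nat_assoc {K M D : C} (f : K ⟶ M) (x : E.I.obj M ⟶ D) :
    f ≫ E.d1.app M ≫ x = E.d1.app K ≫ E.I.map f ≫ x := by
  rw [← Category.assoc, E.d1_naturality', Category.assoc]

lemma aux_d0σ_assoc {T D : C} (x : T ⟶ D) :
    E.d0.app T ≫ E.σ.app T ≫ x = x := by
  rw [← Category.assoc, E.d0_σ]; simp

lemma aux_d1σ_assoc {T D : C} (x : T ⟶ D) :
    E.d1.app T ≫ E.σ.app T ≫ x = x := by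
  rw [← Category.assoc, E.d1_σ]; simp

lemma aux_d0II {T D : C} (x : E.I.obj T ⟶ D) :
    E.d0.app (E.I.obj T) ≫ E.I.map (E.σ.app T) ≫ x = E.σ.app T ≫ E.d0.app T ≫ x := by
  rw [← Category.assoc, ← E.d0_naturality']; simp

lemma aux_d1II {T D : C} (x : E.I.obj T ⟶ D) :
    E.d1.app (E.I.obj T) ≫ E.I.map (E.σ.app T) ≫ x = E.σ.app T ≫ E.d1.app T ≫ x := by
  rw [← Category.assoc, ← E.d1_naturality']; simp

lemma aux_Iid0 {T D : C} (x : E.I.obj T ⟶ D) :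
    E.I.map (E.d0.app T) ≫ E.I.map (E.σ.app T) ≫ x = x := by
  rw [← Category.assoc, ← E.I.map_comp, E.d0_σ]; simp

lemma aux_Iid1 {T D : C} (x : E.I.obj T ⟶ D) :
    E.I.map (E.d1.app T) ≫ E.I.map (E.σ.app T) ≫ x = x := by
  rw [← Category.assoc, ← E.I.map_comp, E.d1_σ]; simp

lemma aux_d0_ι (T : C) : coprod.inl ≫ E.ι T = E.d0.app T := by
  exact coprod.inl_desc _ _

lemma aux_d1_ι (T : C) : coprod.inr ≫ E.ι T = E.d1.app T := by
  exact coprod.inr_desc _ _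

lemma aux_inl_bbox {K M : C} (f : K ⟶ M) :
    pushout.inl _ _ ≫ E.boundaryBox f = E.ι M := by
  exact pushout.inl_desc _ _ _

lemma aux_inr_bbox {K M : C} (f : K ⟶ M) :
    pushout.inr _ _ ≫ E.boundaryBox f = E.I.map f := by
  exact pushout.inr_desc _ _ _

lemma aux_inl_box1 {K M : C} (f : K ⟶ M) :
    pushout.inl _ _ ≫ E.box1 f = E.d1.app M := by
  exact pushout.inl_desc _ _ _

lemma aux_inr_box1 {K M : C} (f : K ⟶ M) :
    pushout.inr _ _ ≫ E.box1 f = E.I.map f := by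
  exact pushout.inr_desc _ _ _

/-- `d1.app T` is a right anodyne extension. -/
lemma aux_d1_mem (hinit : ∀ X : C, L (initial.to X)) (hE : IsExactCylinder E L)
    (hAn : IsRightAnodyneClass E L An) (T : C) : An (E.d1.app T) := by
  obtain ⟨Λ, -, -, hΛ⟩ := hAn.exists_generating_set
  rw [hΛ]
  intro W V g hg
  have hII : IsInitial (E.I.obj (⊥_ C)) := by
    have := hE.preservesColimits
    exact IsInitial.isInitialObj E.I _ initialIsInitial
  have hbox : An (E.box1 (initial.to T)) := hAn.box1_mem _ (hinit T)
  rw [hΛ] at hbox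
  haveI : HasLiftingProperty (E.box1 (initial.to T)) g := hbox g hg
  constructor
  intro top bottom sq
  have w0 : initial.to T ≫ top = E.d1.app (⊥_ C) ≫ hII.to W :=
    Limits.initial.hom_ext _ _
  have sq2 : CommSq (pushout.desc top (hII.to W) w0) (E.box1 (initial.to T)) g bottom := by
    constructor
    apply pushout.hom_ext
    · rw [pushout.inl_desc_assoc, reassoc_of% (aux_inl_box1 E (initial.to T)), sq.w]
    · rw [pushout.inr_desc_assoc, reassoc_of% (aux_inr_box1 E (initial.to T))]
      exact hII.hom_ext _ _
  exact CommSq.HasLift.mk' ⟨sq2.lift, by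
      rw [← aux_inl_box1 E (initial.to T), Category.assoc, sq2.fac_left, pushout.inl_desc],
      sq2.fac_right⟩

/-- Lifting against the corner `boundaryBox f`. -/
lemma aux_bbox_lift {X Z W V : C} {j : X ⟶ Z} {q : W ⟶ V}
    (hlp : HasLiftingProperty (E.boundaryBox j) q)
    (g0 g1 : Z ⟶ W) (ν : E.I.obj X ⟶ W)
    (h0 : j ≫ g0 = E.d0.app X ≫ ν) (h1 : j ≫ g1 = E.d1.app X ≫ ν)
    (β : E.I.obj Z ⟶ V) (t0 : g0 ≫ q = E.d0.app Z ≫ β) (t1 : g1 ≫ q = E.d1.app Z ≫ β)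
    (tν : ν ≫ q = E.I.map j ≫ β) :
    ∃ G : E.I.obj Z ⟶ W, E.d0.app Z ≫ G = g0 ∧ E.d1.app Z ≫ G = g1 ∧
      E.I.map j ≫ G = ν ∧ G ≫ q = β := by
  haveI := hlp
  have hcomp : coprod.map j j ≫ coprod.desc g0 g1 = E.ι X ≫ ν := by
    apply coprod.hom_ext
    · rw [coprod.inl_map_assoc, coprod.inl_desc, reassoc_of% (aux_d0_ι E X)]; exact h0
    · rw [coprod.inr_map_assoc, coprod.inr_desc, reassoc_of% (aux_d1_ι E X)]; exact h1
  have sq : CommSq (pushout.desc (coprod.desc g0 g1) ν hcomp) (E.boundaryBox j) q β := by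
    constructor
    apply pushout.hom_ext
    · rw [pushout.inl_desc_assoc, reassoc_of% (aux_inl_bbox E j)]
      apply coprod.hom_ext
      · rw [coprod.inl_desc_assoc, reassoc_of% (aux_d0_ι E Z)]; exact t0
      · rw [coprod.inr_desc_assoc, reassoc_of% (aux_d1_ι E Z)]; exact t1
    · rw [pushout.inr_desc_assoc, reassoc_of% (aux_inr_bbox E j)]; exact tν
  have hι : E.ι Z ≫ sq.lift = coprod.desc g0 g1 := by
    rw [← aux_inl_bbox E j, Category.assoc, sq.fac_left, pushout.inl_desc]
  refine ⟨sq.lift, ?_, ?_, ?_, sq.fac_right⟩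
  · rw [← aux_d0_ι E Z, Category.assoc, hι, coprod.inl_desc]
  · rw [← aux_d1_ι E Z, Category.assoc, hι, coprod.inr_desc]
  · rw [← aux_inr_bbox E j, Category.assoc, sq.fac_left, pushout.inr_desc]

/-- Lifting against the corner `box1 f`. -/
lemma aux_box1_lift {X Z W V : C} {j : X ⟶ Z} {q : W ⟶ V}
    (hlp : HasLiftingProperty (E.box1 j) q)
    (g : Z ⟶ W) (ν : E.I.obj X ⟶ W) (hcomp : j ≫ g = E.d1.app X ≫ ν)
    (β : E.I.obj Z ⟶ V) (hg : g ≫ q = E.d1.app Z ≫ β) (hν : ν ≫ q = E.I.map j ≫ β) :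
    ∃ Θ : E.I.obj Z ⟶ W, E.d1.app Z ≫ Θ = g ∧ E.I.map j ≫ Θ = ν ∧ Θ ≫ q = β := by
  haveI := hlp
  have sq : CommSq (pushout.desc g ν hcomp) (E.box1 j) q β := by
    constructor
    apply pushout.hom_ext
    · rw [pushout.inl_desc_assoc, reassoc_of% (aux_inl_box1 E j)]; exact hg
    · rw [pushout.inr_desc_assoc, reassoc_of% (aux_inr_box1 E j)]; exact hν
  refine ⟨sq.lift, ?_, ?_, sq.fac_right⟩
  · rw [← aux_inl_box1 E j, Category.assoc, sq.fac_left, pushout.inl_desc]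
  · rw [← aux_inr_box1 E j, Category.assoc, sq.fac_left, pushout.inr_desc]

/-- The square-filling lemma. -/
lemma aux_fill {T W V : C} {q : W ⟶ V}
    (hq : IsFib An q) (hd : An (E.boundaryBox (E.d1.app T)))
    (m0 m1 h : E.I.obj T ⟶ W) (β : E.I.obj (E.I.obj T) ⟶ V)
    (c0 : E.d1.app T ≫ m0 = E.d0.app T ≫ h)
    (c1 : E.d1.app T ≫ m1 = E.d1.app T ≫ h)
    (t0 : m0 ≫ q = E.d0.app (E.I.obj T) ≫ β)
    (t1 : m1 ≫ q = E.d1.app (E.I.obj T) ≫ β)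
    (th : h ≫ q = E.I.map (E.d1.app T) ≫ β) :
    ∃ N : E.I.obj T ⟶ W,
      E.d0.app T ≫ N = E.d0.app T ≫ m0 ∧
      E.d1.app T ≫ N = E.d0.app T ≫ m1 ∧
      N ≫ q = E.I.map (E.d0.app T) ≫ β := by
  obtain ⟨G, G0, G1, Gj, Gt⟩ := aux_bbox_lift E (hq _ hd) m0 m1 h c0 c1 β t0 t1 th
  refine ⟨E.I.map (E.d0.app T) ≫ G, ?_, ?_, ?_⟩
  · rw [← G0, aux_d0_nat_assoc (K := T) E (E.d0.app T) G]
  · rw [← G1, aux_d1_nat_assoc (K := T) E (E.d0.app T) G]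
  · rw [Category.assoc, Gt]

lemma aux_refl {T A W : C} {c : T ⟶ A} {q : W ⟶ A} (g : OverHom c q) :
    E.OverHomotopy c q g g :=
  ⟨E.σ.app T ≫ g.1, aux_d0σ_assoc E g.1, aux_d1σ_assoc E g.1,
    by rw [Category.assoc, g.2]⟩

lemma aux_star {T A W : C} {c : T ⟶ A} {q : W ⟶ A} (hq : IsFib An q)
    (hd : An (E.boundaryBox (E.d1.app T)))
    {u v w : OverHom c q}
    (hv : E.OverHomotopy c q v u) (hw : E.OverHomotopy c q w u) :
    E.OverHomotopy c q v w := by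
  obtain ⟨H, H0, H1, Ht⟩ := hv
  obtain ⟨K, K0, K1, Kt⟩ := hw
  obtain ⟨N, n0, n1, nt⟩ := aux_fill E hq hd H K (E.σ.app T ≫ u.1)
      (E.I.map (E.σ.app T) ≫ E.σ.app T ≫ c)
      (by rw [H1, aux_d0σ_assoc])
      (by rw [K1, aux_d1σ_assoc])
      (by rw [Ht, aux_d0II, aux_d0σ_assoc])
      (by rw [Kt, aux_d1II, aux_d1σ_assoc])
      (by rw [Category.assoc, u.2, aux_Iid1])
  exact ⟨N, by rw [n0, H0], by rw [n1, K0], by rw [nt, aux_Iid0]⟩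

lemma aux_equivalence {T A W : C} {c : T ⟶ A} {q : W ⟶ A} (hq : IsFib An q)
    (hd : An (E.boundaryBox (E.d1.app T))) :
    Equivalence (E.OverHomotopy c q) := by
  have hsymm : ∀ {a b : OverHom c q}, E.OverHomotopy c q a b → E.OverHomotopy c q b a :=
    fun h => aux_star E hq hd (aux_refl E _) h
  exact ⟨fun g => aux_refl E g, hsymm, fun h1 h2 => aux_star E hq hd h1 (hsymm h2)⟩

lemma aux_htpy_of_eq {T A W : C} {c : T ⟶ A} {q : W ⟶ A} (hq : IsFib An q)
    (hd : An (E.boundaryBox (E.d1.app T))) {g g' : OverHom c q}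
    (h : Quot.mk (E.OverHomotopy c q) g = Quot.mk (E.OverHomotopy c q) g') :
    E.OverHomotopy c q g g' :=
  aux_rel_of_quot_eq (aux_equivalence E hq hd) h

end Auxiliary
/-- Proposition 3.9 (leftcancel): a map is `I`-final iff it factors as a right `I`-anodyne
extension followed by a map in `R`. -/
theorem statement_13    {C : Type u} [Category.{v} C] [LocallyPresentable C]
    (L R : MorphismProperty C) (hW : IsCofGenWFS L R)
    (E : Cylinder C) (hE : IsExactCylinder E L)
    (An : MorphismProperty C) (hAn : IsRightAnodyneClass E L An)
    ⦃X Y : C⦄ (f : X ⟶ Y) :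
    IsFinal E An f ↔
      ∃ (Z : C) (i : X ⟶ Z) (p : Z ⟶ Y), An i ∧ R p ∧ i ≫ p = f := by
  obtain ⟨Λ, -, -, hΛ⟩ := hAn.exists_generating_set
  have hfib_of_rlp : ∀ {Wq Vq : C} {g : Wq ⟶ Vq}, rlp (ofArrows Λ) g → IsFib An g := by
    intro Wq Vq g hg A B f' hf'
    rw [hΛ] at hf'
    exact hf' g hg
  have hfib_of_R : ∀ {Z' Y' : C} {p : Z' ⟶ Y'}, R p → IsFib An p := by
    intro Z' Y' p hp A B f' hf'
    have hp' : rlp L p := by rw [← hW.rlp_eq]; exact hp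
    exact hp' f' (hAn.le _ hf')
  have hd1 : ∀ T : C, An (E.d1.app T) := aux_d1_mem E hW.initial_mem hE hAn
  have hbb : ∀ T : C, An (E.boundaryBox (E.d1.app T)) := fun T => hAn.boundaryBox_mem _ (hd1 T)
  constructor
  · -- Forward direction
    intro hfin
    obtain ⟨Z₀, j, p₀, hjL, hp₀, hfact⟩ := hW.factorization f
    refine ⟨Z₀, j, p₀, ?_, hp₀, hfact⟩
    have hp₀rlp : rlp L p₀ := by rw [← hW.rlp_eq]; exact hp₀
    have hp₀fib : IsFib An p₀ := hfib_of_R hp₀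
    -- Step 1: a section `t` of `p₀` together with a fibrewise homotopy `H : f ≫ t ~ j`.
    obtain ⟨x, hx⟩ := (hfin Y (𝟙 Y) p₀ hp₀fib).2
      (Quot.mk _ ⟨j, by rw [hfact, Category.comp_id]⟩)
    obtain ⟨⟨t, ht⟩, rfl⟩ := Quot.exists_rep x
    have hx' : Quot.mk (E.OverHomotopy (f ≫ 𝟙 Y) p₀) ⟨f ≫ t, by rw [Category.assoc, ht]⟩ =
        Quot.mk (E.OverHomotopy (f ≫ 𝟙 Y) p₀) ⟨j, by rw [hfact, Category.comp_id]⟩ := hx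
    obtain ⟨H, H0, H1, Ht⟩ := aux_htpy_of_eq E hp₀fib (hbb X) hx'
    rw [Category.comp_id] at Ht
    -- Step 2: the connection square `Ξ` producing the reversed homotopy `H₁ : j ~ f ≫ t`.
    have hPC := hE.preservesColimits
    haveI : IsIso (coprodComparison E.I X X) := inferInstance
    have hIext : ∀ {D : C} (φ ψ : E.I.obj (X ⨿ X) ⟶ D),
        E.I.map coprod.inl ≫ φ = E.I.map coprod.inl ≫ ψ →
        E.I.map coprod.inr ≫ φ = E.I.map coprod.inr ≫ ψ → φ = ψ := by
      intro D φ ψ h1 h2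
      rw [← cancel_epi (coprodComparison E.I X X)]
      apply coprod.hom_ext
      · rw [← Category.assoc, ← Category.assoc, coprodComparison_inl]
        exact h1
      · rw [← Category.assoc, ← Category.assoc, coprodComparison_inr]
        exact h2
    set hh : E.I.obj (X ⨿ X) ⟶ Z₀ :=
      inv (coprodComparison E.I X X) ≫ coprod.desc (E.σ.app X ≫ j) H with hhdef
    have hhl : E.I.map coprod.inl ≫ hh = E.σ.app X ≫ j := by
      rw [hhdef, ← coprodComparison_inl E.I, Category.assoc, IsIso.hom_inv_id_assoc,
        coprod.inl_desc]
    have hhr : E.I.map coprod.inr ≫ hh = H := by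
      rw [hhdef, ← coprodComparison_inr E.I, Category.assoc, IsIso.hom_inv_id_assoc,
        coprod.inr_desc]
    have hcompΞ : E.ι X ≫ (E.σ.app X ≫ j) = E.d1.app (X ⨿ X) ≫ hh := by
      apply coprod.hom_ext
      · rw [reassoc_of% (aux_d0_ι E X), aux_d0σ_assoc,
          aux_d1_nat_assoc (K := X) E coprod.inl hh, hhl, aux_d1σ_assoc]
      · rw [reassoc_of% (aux_d1_ι E X), aux_d1σ_assoc,
          aux_d1_nat_assoc (K := X) E coprod.inr hh, hhr, H1]
    have sqΞ : CommSq (pushout.desc (E.σ.app X ≫ j) hh hcompΞ) (E.box1 (E.ι X)) p₀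
        (E.σ.app (E.I.obj X) ≫ E.σ.app X ≫ f) := by
      constructor
      apply pushout.hom_ext
      · rw [pushout.inl_desc_assoc, reassoc_of% (aux_inl_box1 E (E.ι X)),
          aux_d1σ_assoc, Category.assoc, hfact]
      · rw [pushout.inr_desc_assoc, reassoc_of% (aux_inr_box1 E (E.ι X))]
        apply hIext
        · rw [reassoc_of% hhl, hfact, ← Functor.map_comp_assoc, aux_d0_ι,
            aux_sigma_nat_assoc (K := X) E (E.d0.app X), aux_d0σ_assoc]
        · rw [reassoc_of% hhr, Ht, ← Functor.map_comp_assoc, aux_d1_ι,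
            aux_sigma_nat_assoc (K := X) E (E.d1.app X), aux_d1σ_assoc]
    haveI := hp₀fib _ (hAn.box1_mem _ (hE.ι_mem X))
    obtain ⟨Ξ, Ξd1, Ξι, Ξt⟩ : ∃ Ξ : E.I.obj (E.I.obj X) ⟶ Z₀,
        E.d1.app (E.I.obj X) ≫ Ξ = E.σ.app X ≫ j ∧ E.I.map (E.ι X) ≫ Ξ = hh ∧
        Ξ ≫ p₀ = E.σ.app (E.I.obj X) ≫ E.σ.app X ≫ f := by
      refine ⟨sqΞ.lift, ?_, ?_, sqΞ.fac_right⟩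
      · rw [← aux_inl_box1 E (E.ι X), Category.assoc, sqΞ.fac_left, pushout.inl_desc]
      · rw [← aux_inr_box1 E (E.ι X), Category.assoc, sqΞ.fac_left, pushout.inr_desc]
    have Ξm0 : E.I.map (E.d0.app X) ≫ Ξ = E.σ.app X ≫ j := by
      rw [← aux_d0_ι E X, Functor.map_comp, Category.assoc, Ξι, hhl]
    have Ξm1 : E.I.map (E.d1.app X) ≫ Ξ = H := by
      rw [← aux_d1_ι E X, Functor.map_comp, Category.assoc, Ξι, hhr]
    set H₁ : E.I.obj X ⟶ Z₀ := E.d0.app (E.I.obj X) ≫ Ξ with H₁def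
    have H₁0 : E.d0.app X ≫ H₁ = j := by
      rw [H₁def, aux_d0_nat_assoc (K := X) E (E.d0.app X) Ξ, Ξm0, aux_d0σ_assoc]
    have H₁1 : E.d1.app X ≫ H₁ = f ≫ t := by
      rw [H₁def, aux_d0_nat_assoc (K := X) E (E.d1.app X) Ξ, Ξm1]
      exact H0
    have H₁t : H₁ ≫ p₀ = E.σ.app X ≫ f := by
      rw [H₁def, Category.assoc, Ξt, aux_d0σ_assoc]
    -- Step 3: the strong fibrewise retraction `Khat`.
    obtain ⟨Khat, Khat0, Khat1, Khatj, -⟩ := aux_bbox_lift E (hp₀rlp _ (hE.boundaryBox_mem j hjL))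
      (𝟙 Z₀) (p₀ ≫ t) H₁
      (by rw [Category.comp_id, H₁0])
      (by rw [H₁1, ← Category.assoc, hfact])
      (E.σ.app Z₀ ≫ p₀)
      (by rw [Category.id_comp, aux_d0σ_assoc])
      (by rw [Category.assoc, ht, Category.comp_id, aux_d1σ_assoc])
      (by rw [H₁t, aux_sigma_nat_assoc E j p₀, hfact])
    -- Step 4: `j` is anodyne.
    rw [hΛ]
    intro Wq Vq qg hqg
    have hq : IsFib An qg := hfib_of_rlp hqg
    constructor
    intro u b sq
    haveI := hq _ (hd1 X)
    have sqν : CommSq u (E.d1.app X) qg (H ≫ b) :=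
      ⟨by rw [sq.w, ← Category.assoc, H1]⟩
    obtain ⟨vhat, hvhat1, hvhatt⟩ : ∃ vhat : E.I.obj X ⟶ Wq, E.d1.app X ≫ vhat = u ∧ vhat ≫ qg = H ≫ b :=
      ⟨sqν.lift, sqν.fac_left, sqν.fac_right⟩
    have hH0b : E.d0.app X ≫ H ≫ b = f ≫ t ≫ b := by
      rw [← Category.assoc, H0, Category.assoc]
    have hH1b : E.d1.app X ≫ H ≫ b = j ≫ b := by
      rw [← Category.assoc, H1]
    have hu₀ : (E.d0.app X ≫ vhat) ≫ qg = f ≫ t ≫ b := by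
      rw [Category.assoc, hvhatt, hH0b]
    obtain ⟨x₂, hx₂⟩ := (hfin Vq (t ≫ b) qg hq).2 (Quot.mk _ ⟨E.d0.app X ≫ vhat, hu₀⟩)
    obtain ⟨⟨y, hy⟩, rfl⟩ := Quot.exists_rep x₂
    have hx₂' : Quot.mk (E.OverHomotopy (f ≫ t ≫ b) qg) ⟨f ≫ y, by rw [Category.assoc, hy]⟩ =
        Quot.mk (E.OverHomotopy (f ≫ t ≫ b) qg) ⟨E.d0.app X ≫ vhat, hu₀⟩ := hx₂
    obtain ⟨M, M0, M1, Mt⟩ := aux_htpy_of_eq E hq (hbb X) hx₂'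
    -- fill 1 : replace `vhat` by a homotopy `vtil` from `f ≫ y` to `u` with track `H ≫ b`.
    obtain ⟨vtil, vn0, vn1, vnt⟩ := aux_fill E hq (hbb X) M (E.σ.app X ≫ u) vhat
      (E.I.map (E.σ.app X) ≫ H ≫ b)
      (by rw [M1])
      (by rw [aux_d1σ_assoc, hvhat1])
      (by rw [Mt, aux_d0II, hH0b])
      (by rw [Category.assoc, sq.w, aux_d1II, hH1b])
      (by rw [hvhatt, aux_Iid1])
    have vt0 : E.d0.app X ≫ vtil = f ≫ y := by rw [vn0, M0]
    have vt1 : E.d1.app X ≫ vtil = u := by rw [vn1, aux_d0σ_assoc]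
    have vtt : vtil ≫ qg = H ≫ b := by rw [vnt, aux_Iid0]
    -- lift of `f ≫ y` along the track `H₁ ≫ b`.
    have sqvnu2 : CommSq (f ≫ y) (E.d1.app X) qg (H₁ ≫ b) :=
      ⟨by rw [Category.assoc, hy, ← Category.assoc, ← H₁1, Category.assoc]⟩
    obtain ⟨vnu2, hvnu21, hvnu2t⟩ : ∃ vnu2 : E.I.obj X ⟶ Wq,
        E.d1.app X ≫ vnu2 = f ≫ y ∧ vnu2 ≫ qg = H₁ ≫ b :=
      ⟨sqvnu2.lift, sqvnu2.fac_left, sqvnu2.fac_right⟩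
    -- transport `p₀ ≫ y` along `Khat ≫ b` to get the candidate lift `g`.
    obtain ⟨Th, Th1, Thj, Tht⟩ := aux_box1_lift E (hq _ (hAn.box1_mem j hjL)) (p₀ ≫ y) vnu2
      (by rw [hvnu21, ← Category.assoc, hfact])
      (Khat ≫ b)
      (by rw [Category.assoc, hy, ← Category.assoc, ← Khat1, Category.assoc])
      (by rw [hvnu2t, ← Category.assoc, ← Khatj, Category.assoc])
    have hgq : (E.d0.app Z₀ ≫ Th) ≫ qg = b := by
      rw [Category.assoc, Tht, ← Category.assoc, Khat0]; simp
    have hjg : j ≫ E.d0.app Z₀ ≫ Th = E.d0.app X ≫ vnu2 := by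
      rw [aux_d0_nat_assoc (K := X) E j Th, Thj]
    -- fill 2 : the fibrewise homotopy `N` between `j ≫ g` and `u`.
    obtain ⟨N, N0, N1, Nt⟩ := aux_fill E hq (hbb X) vnu2 (E.σ.app X ≫ u) vtil (Ξ ≫ b)
      (by rw [hvnu21, vt0])
      (by rw [aux_d1σ_assoc, vt1])
      (by rw [hvnu2t, H₁def, Category.assoc])
      (by rw [Category.assoc, sq.w, ← Category.assoc, ← Ξd1, Category.assoc])
      (by rw [vtt, ← Category.assoc, ← Ξm1, Category.assoc])
    have N0' : E.d0.app X ≫ N = j ≫ E.d0.app Z₀ ≫ Th := by rw [N0, hjg]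
    have N1' : E.d1.app X ≫ N = u := by rw [N1, aux_d0σ_assoc]
    have Nt' : N ≫ qg = E.σ.app X ≫ j ≫ b := by
      rw [Nt, ← Category.assoc, Ξm0, Category.assoc]
    have hjgq : (j ≫ E.d0.app Z₀ ≫ Th) ≫ qg = j ≫ b := by
      rw [Category.assoc, hgq]
    have hNrel : E.OverHomotopy (j ≫ b) qg ⟨j ≫ E.d0.app Z₀ ≫ Th, hjgq⟩ ⟨u, sq.w⟩ :=
      ⟨N, N0', N1', Nt'⟩
    obtain ⟨N', N'0, N'1, N't⟩ := (aux_equivalence E hq (hbb X)).symm hNrel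
    -- strictification.
    obtain ⟨Th2, Th21, Th2j, Th2t⟩ := aux_box1_lift E (hq _ (hAn.box1_mem j hjL))
      (E.d0.app Z₀ ≫ Th) N' N'1.symm (E.σ.app Z₀ ≫ b)
      (by rw [hgq, aux_d1σ_assoc])
      (by rw [N't, aux_sigma_nat_assoc E j b])
    exact CommSq.HasLift.mk' ⟨E.d0.app Z₀ ≫ Th2,
      by rw [aux_d0_nat_assoc (K := X) E j Th2, Th2j]; exact N'0,
      by rw [Category.assoc, Th2t, aux_d0σ_assoc]⟩
  · -- Backward direction
    rintro ⟨Z, i, p, hi, hp, rfl⟩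
    intro A a W q hq
    have hprlp : rlp L p := by rw [← hW.rlp_eq]; exact hp
    obtain ⟨s, hsp⟩ : ∃ s : Y ⟶ Z, s ≫ p = 𝟙 Y := by
      haveI := hprlp _ (hW.initial_mem Y)
      have sqs : CommSq (initial.to Z) (initial.to Y) p (𝟙 Y) :=
        ⟨Limits.initial.hom_ext _ _⟩
      exact ⟨sqs.lift, sqs.fac_right⟩
    have hsx : ∀ {D : C} (x : Y ⟶ D), s ≫ p ≫ x = x := by
      intro D x; rw [← Category.assoc, hsp, Category.id_comp]
    obtain ⟨K, hK0, hK1, hKp⟩ : ∃ K : E.I.obj Z ⟶ Z, E.d0.app Z ≫ K = 𝟙 Z ∧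
        E.d1.app Z ≫ K = p ≫ s ∧ K ≫ p = E.σ.app Z ≫ p := by
      haveI := hprlp _ (hE.ι_mem Z)
      have w : coprod.desc (𝟙 Z) (p ≫ s) ≫ p = E.ι Z ≫ E.σ.app Z ≫ p := by
        apply coprod.hom_ext
        · rw [coprod.inl_desc_assoc, Category.id_comp, reassoc_of% (aux_d0_ι E Z),
            aux_d0σ_assoc]
        · rw [coprod.inr_desc_assoc, Category.assoc, hsp, Category.comp_id,
            reassoc_of% (aux_d1_ι E Z), aux_d1σ_assoc]
      have sqK : CommSq (coprod.desc (𝟙 Z) (p ≫ s)) (E.ι Z) p (E.σ.app Z ≫ p) := ⟨w⟩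
      refine ⟨sqK.lift, ?_, ?_, sqK.fac_right⟩
      · rw [← aux_d0_ι E Z, Category.assoc, sqK.fac_left, coprod.inl_desc]
      · rw [← aux_d1_ι E Z, Category.assoc, sqK.fac_left, coprod.inr_desc]
    constructor
    · -- injectivity
      intro x y hxy
      obtain ⟨h, rfl⟩ := Quot.exists_rep x
      obtain ⟨h', rfl⟩ := Quot.exists_rep y
      have hNrel : E.OverHomotopy ((i ≫ p) ≫ a) q
          ⟨(i ≫ p) ≫ h.1, by rw [Category.assoc, h.2]⟩
          ⟨(i ≫ p) ≫ h'.1, by rw [Category.assoc, h'.2]⟩ :=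
        aux_htpy_of_eq E hq (hbb X) hxy
      obtain ⟨N, N0, N1, Nt⟩ := hNrel
      obtain ⟨G, G0, G1, Gj, Gt⟩ := aux_bbox_lift E (hq _ (hAn.boundaryBox_mem i hi))
        (p ≫ h.1) (p ≫ h'.1) N
        (by rw [N0]; exact (Category.assoc i p h.1).symm)
        (by rw [N1]; exact (Category.assoc i p h'.1).symm)
        (E.σ.app Z ≫ p ≫ a)
        (by rw [Category.assoc, h.2, aux_d0σ_assoc])
        (by rw [Category.assoc, h'.2, aux_d1σ_assoc])
        (by rw [Nt, aux_sigma_nat_assoc E i (p ≫ a), Category.assoc])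
      apply Quot.sound
      refine ⟨E.I.map s ≫ G, ?_, ?_, ?_⟩
      · rw [← aux_d0_nat_assoc E s G, G0, hsx]
      · rw [← aux_d1_nat_assoc E s G, G1, hsx]
      · rw [Category.assoc, Gt, aux_sigma_nat_assoc E s (p ≫ a), hsx]
    · -- surjectivity
      intro x
      obtain ⟨⟨g, hg⟩, rfl⟩ := Quot.exists_rep x
      haveI := hq i hi
      have sql : CommSq g i q (p ≫ a) := ⟨by rw [hg, Category.assoc]⟩
      obtain ⟨l, hil, hlq⟩ : ∃ l : Z ⟶ W, i ≫ l = g ∧ l ≫ q = p ≫ a :=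
        ⟨sql.lift, sql.fac_left, sql.fac_right⟩
      have hm : (s ≫ l) ≫ q = a := by rw [Category.assoc, hlq, hsx]
      refine ⟨Quot.mk _ ⟨s ≫ l, hm⟩, ?_⟩
      have hKl : E.d0.app Z ≫ K ≫ l = l := by
        rw [← Category.assoc, hK0]; simp
      have hKl1 : E.d1.app Z ≫ K ≫ l = p ≫ s ≫ l := by
        rw [← Category.assoc, hK1, Category.assoc]
      have hrel : E.OverHomotopy ((i ≫ p) ≫ a) q ⟨g, hg⟩
          ⟨(i ≫ p) ≫ s ≫ l, by rw [Category.assoc, hm]⟩ := by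
        refine ⟨E.I.map i ≫ K ≫ l, ?_, ?_, ?_⟩
        · rw [← aux_d0_nat_assoc E i (K ≫ l), hKl]; exact hil
        · rw [← aux_d1_nat_assoc E i (K ≫ l), hKl1]
          exact (Category.assoc i p (s ≫ l)).symm
        · rw [Category.assoc, Category.assoc, hlq, ← Category.assoc K p a, hKp,
            Category.assoc, aux_sigma_nat_assoc E i, Category.assoc]
      exact (Quot.sound hrel).symm

end Paper
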